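/- arXiv:math-ph/0402052 — 2 statements merged into one kernel-verified Lean document; each statement's English description precedes it below -/
import Mathlib

section
/- Let M, Ω : I → so(n) satisfy Euler's equation Ṁ = [M, Ω], where M(t) = JΩ(t) + Ω(t)J for a constant symmetric matrix J. Then for every λ ∈ R, the family L_λ(t) = M(t) + λJ² satisfies the Lax equation L̇_λ = [L_λ, B_λ] with B_λ(t) = Ω(t) + λJ (Manakov's Lax pair). -/
open Matrix

attribute [local instance] Matrix.normedAddCommGroup Matrix.normedSpace

/-- Manakov's Lax pair: if `M = JΩ + ΩJ` (with `J` constant symmetric, `Ω` skew-symmetric)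
satisfies Euler's equation `Ṁ = [M, Ω]` on the interval `I`, then for every `λ ∈ ℝ` the family
`L_λ = M + λJ²` satisfies the Lax equation `L̇_λ = [L_λ, B_λ]` with `B_λ = Ω + λJ`. -/
theorem stmt_10 (n : ℕ) (I : Set ℝ) (J : Matrix (Fin n) (Fin n) ℝ) (hJ : Jᵀ = J)
    (Ω M : ℝ → Matrix (Fin n) (Fin n) ℝ)
    (hΩskew : ∀ t ∈ I, (Ω t)ᵀ = -(Ω t))
    (hM : ∀ t, M t = J * Ω t + Ω t * J)
    (heuler : ∀ t ∈ I, HasDerivWithinAt M (M t * Ω t - Ω t * M t) I t) :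
    ∀ l : ℝ, ∀ t ∈ I,
      HasDerivWithinAt (fun s => M s + l • J ^ 2)
        ((M t + l • J ^ 2) * (Ω t + l • J) - (Ω t + l • J) * (M t + l • J ^ 2)) I t := by
  intro l t ht
  have h := (heuler t ht).add_const (l • J ^ 2)
  convert h using 1
  · rfl
  · rfl
  · rfl
  rw [hM t]
  simp only [smul_mul_assoc, mul_smul_comm, pow_two]
  noncomm_ring
  simp only [smul_add, smul_smul]
  abel
end

section
/- Under the hypotheses of Manakov's Lax pair (Ṁ = [M,Ω] with M = JΩ + ΩJ, J constant symmetric), for each k ≥ 2 and each λ, the quantity tr((M(t) + λJ²)^k) is constant in t; hence the coefficients of the polynomial λ ↦ tr((M + λJ²)^k) are integrals of motion. -/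
open Matrix

attribute [local instance] Matrix.normedAddCommGroup Matrix.normedSpace

section Helpers

variable {n : ℕ} {I : Set ℝ} {t : ℝ}

private lemma entry_hasDeriv {f : ℝ → Matrix (Fin n) (Fin n) ℝ}
    {f' : Matrix (Fin n) (Fin n) ℝ} (h : HasDerivWithinAt f f' I t) (i j : Fin n) :
    HasDerivWithinAt (fun s => f s i j) (f' i j) I t :=
  hasDerivWithinAt_pi.1 (hasDerivWithinAt_pi.1 h i) j

private lemma matrix_hasDeriv_of_entries {f : ℝ → Matrix (Fin n) (Fin n) ℝ}
    {f' : Matrix (Fin n) (Fin n) ℝ}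
    (h : ∀ i j, HasDerivWithinAt (fun s => f s i j) (f' i j) I t) :
    HasDerivWithinAt f f' I t :=
  hasDerivWithinAt_pi.2 fun i => hasDerivWithinAt_pi.2 fun j => h i j

private lemma matMul_hasDeriv {f g : ℝ → Matrix (Fin n) (Fin n) ℝ}
    {f' g' : Matrix (Fin n) (Fin n) ℝ}
    (hf : HasDerivWithinAt f f' I t) (hg : HasDerivWithinAt g g' I t) :
    HasDerivWithinAt (fun s => f s * g s) (f' * g t + f t * g') I t := by
  refine matrix_hasDeriv_of_entries fun i j => ?_
  have : HasDerivWithinAt (fun s => ∑ k, f s i k * g s k j)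
      (∑ k, (f' i k * g t k j + f t i k * g' k j)) I t :=
    HasDerivWithinAt.fun_sum fun k _ => (entry_hasDeriv hf i k).mul (entry_hasDeriv hg k j)
  simpa [Matrix.mul_apply, Matrix.add_apply, Finset.sum_add_distrib] using this

private lemma trace_hasDeriv {f : ℝ → Matrix (Fin n) (Fin n) ℝ}
    {f' : Matrix (Fin n) (Fin n) ℝ} (h : HasDerivWithinAt f f' I t) :
    HasDerivWithinAt (fun s => (f s).trace) f'.trace I t := by
  have : HasDerivWithinAt (fun s => ∑ i, f s i i) (∑ i, f' i i) I t :=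
    HasDerivWithinAt.fun_sum fun i _ => entry_hasDeriv h i i
  simpa [Matrix.trace, Matrix.diag] using this

private lemma pow_hasDeriv {L : ℝ → Matrix (Fin n) (Fin n) ℝ}
    {B : Matrix (Fin n) (Fin n) ℝ}
    (hL : HasDerivWithinAt L (L t * B - B * L t) I t) (m : ℕ) :
    HasDerivWithinAt (fun s => L s ^ m) (L t ^ m * B - B * L t ^ m) I t := by
  induction m with
  | zero =>
    simp only [pow_zero, mul_one, one_mul, sub_self]
    exact hasDerivWithinAt_const t I _
  | succ m ih =>
    have h := matMul_hasDeriv ih hL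
    have heq : (L t ^ m * B - B * L t ^ m) * L t + L t ^ m * (L t * B - B * L t)
        = L t ^ (m + 1) * B - B * L t ^ (m + 1) := by
      rw [pow_succ]; noncomm_ring
    simpa [pow_succ, heq] using h

end Helpers

/-- Under the hypotheses of Manakov's Lax pair (`Ṁ = [M,Ω]` with `M = JΩ + ΩJ`, `J` constant
symmetric, `Ω` skew), for each `k ≥ 2` and each `λ ∈ ℝ` the quantity `tr((M(t) + λJ²)^k)` is
constant in `t`; hence the coefficients of `λ ↦ tr((M + λJ²)^k)` are integrals of motion. -/
theorem stmt_11 (n : ℕ) (I : Set ℝ) (hI : Convex ℝ I) (J : Matrix (Fin n) (Fin n) ℝ)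
    (hJ : Jᵀ = J) (Ω M : ℝ → Matrix (Fin n) (Fin n) ℝ)
    (hΩskew : ∀ t ∈ I, (Ω t)ᵀ = -(Ω t))
    (hM : ∀ t, M t = J * Ω t + Ω t * J)
    (heuler : ∀ t ∈ I, HasDerivWithinAt M (M t * Ω t - Ω t * M t) I t) :
    ∀ k : ℕ, 2 ≤ k → ∀ l : ℝ, ∀ s ∈ I, ∀ t ∈ I,
      ((M s + l • J ^ 2) ^ k).trace = ((M t + l • J ^ 2) ^ k).trace := by
  intro k hk l s hs t ht
  set f : ℝ → ℝ := fun u => ((M u + l • J ^ 2) ^ k).trace with hf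
  have key : ∀ u ∈ I, HasDerivWithinAt f 0 I u := by
    intro u hu
    set A : Matrix (Fin n) (Fin n) ℝ := M u + l • J ^ 2 with hA
    set B : Matrix (Fin n) (Fin n) ℝ := Ω u + l • J with hB
    have hLderiv : HasDerivWithinAt (fun v => M v + l • J ^ 2) (A * B - B * A) I u := by
      have h1 : HasDerivWithinAt (fun v => M v + l • J ^ 2)
          (M u * Ω u - Ω u * M u) I u := (heuler u hu).add_const _
      have heq : M u * Ω u - Ω u * M u = A * B - B * A := by
        rw [hA, hB, hM u]
        simp only [add_mul, mul_add, smul_mul_assoc, mul_smul_comm, smul_smul, pow_two]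
        noncomm_ring
        simp only [smul_add, smul_smul]
        abel
      rwa [heq] at h1
    have hpow := pow_hasDeriv hLderiv k
    have htr := trace_hasDeriv hpow
    have : (A ^ k * B - B * A ^ k).trace = 0 := by
      rw [trace_sub, trace_mul_comm, sub_self]
    rwa [this] at htr
  have bound : ∀ u ∈ I, ‖(fun _ => (0 : ℝ)) u‖ ≤ 0 := by simp
  have := hI.norm_image_sub_le_of_norm_hasDerivWithin_le
    (f' := fun _ => (0 : ℝ)) key bound ht hs
  simp only [zero_mul, norm_le_zero_iff, sub_eq_zero] at this
  exact this
end
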